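/- For every nonnegative integer n, Σ_{k=0}^{n} C(n,k) · W_k · 3^{n-k} equals C(2n/3, n/3) · C(n, n/3) if 3 divides n, and equals 0 if 3 does not divide n. -/

import Mathlib

/-- `W n = Σ_{k=0}^{⌊n/3⌋} C(2k,k)·C(3k,k)·C(n,3k)·(-3)^{n-3k}`. -/
def W (n : ℕ) : ℚ :=
  ∑ k ∈ Finset.range (n / 3 + 1),
    (Nat.choose (2 * k) k : ℚ) * (Nat.choose (3 * k) k : ℚ) *
      (Nat.choose n (3 * k) : ℚ) * (-3 : ℚ) ^ (n - 3 * k)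

private lemma key (n m : ℕ) :
    ∑ k ∈ Finset.range (n + 1),
      (Nat.choose n k : ℚ) * (Nat.choose k m : ℚ) * (-3 : ℚ) ^ (k - m) * 3 ^ (n - k)
    = (Nat.choose n m : ℚ) * (0 : ℚ) ^ (n - m) := by
  rcases le_or_gt m n with h | h
  · have h1 : ∑ k ∈ Finset.range (n + 1),
        (Nat.choose n k : ℚ) * (Nat.choose k m : ℚ) * (-3 : ℚ) ^ (k - m) * 3 ^ (n - k)
        = ∑ k ∈ Finset.Ico m (n + 1),
        (Nat.choose n k : ℚ) * (Nat.choose k m : ℚ) * (-3 : ℚ) ^ (k - m) * 3 ^ (n - k) := by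
      rw [Finset.range_eq_Ico, ← Finset.sum_Ico_consecutive _ (Nat.zero_le m)
        (by omega : m ≤ n + 1)]
      have : ∑ k ∈ Finset.Ico 0 m,
          (Nat.choose n k : ℚ) * (Nat.choose k m : ℚ) * (-3 : ℚ) ^ (k - m) * 3 ^ (n - k) = 0 := by
        apply Finset.sum_eq_zero
        intro k hk
        simp only [Finset.mem_Ico] at hk
        rw [Nat.choose_eq_zero_of_lt hk.2]
        simp
      rw [this, zero_add]
    rw [h1, Finset.sum_Ico_eq_sum_range]
    have h2 : ∀ i ∈ Finset.range (n + 1 - m),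
        (Nat.choose n (m + i) : ℚ) * (Nat.choose (m + i) m : ℚ) * (-3 : ℚ) ^ (m + i - m)
          * 3 ^ (n - (m + i))
        = (Nat.choose n m : ℚ) * ((-3 : ℚ) ^ i * 3 ^ (n - m - i) * (Nat.choose (n - m) i : ℚ)) := by
      intro i hi
      simp only [Finset.mem_range] at hi
      have hmi : m + i ≤ n := by omega
      have hchoose : Nat.choose n (m + i) * Nat.choose (m + i) m
          = Nat.choose n m * Nat.choose (n - m) i := by
        rw [Nat.choose_mul (n := n) (Nat.le_add_right m i),
          show m + i - m = i from by omega]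
      have : ((Nat.choose n (m + i) * Nat.choose (m + i) m : ℕ) : ℚ)
          = ((Nat.choose n m * Nat.choose (n - m) i : ℕ) : ℚ) := by rw [hchoose]
      push_cast at this
      have hexp : m + i - m = i := by omega
      have hexp2 : n - (m + i) = n - m - i := by omega
      rw [hexp, hexp2]
      linear_combination this * ((-3 : ℚ) ^ i * 3 ^ (n - m - i))
    rw [Finset.sum_congr rfl h2, ← Finset.mul_sum]
    congr 1
    have := add_pow (-3 : ℚ) 3 (n - m)
    simp only [neg_add_cancel] at this
    rw [show n + 1 - m = n - m + 1 from by omega]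
    exact this.symm
  · have h0 : (Nat.choose n m : ℚ) = 0 := by
      rw [Nat.choose_eq_zero_of_lt h]; simp
    rw [h0, zero_mul]
    apply Finset.sum_eq_zero
    intro k hk
    simp only [Finset.mem_range] at hk
    rw [Nat.choose_eq_zero_of_lt (by omega : k < m)]
    simp

theorem sum_choose_W_three (n : ℕ) :
    ∑ k ∈ Finset.range (n + 1), (Nat.choose n k : ℚ) * W k * 3 ^ (n - k)
      = if 3 ∣ n then
          (Nat.choose (2 * (n / 3)) (n / 3) : ℚ) * (Nat.choose n (n / 3) : ℚ)
        else 0 := by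
  -- Replace W k by a sum over range (n+1)
  have hW : ∀ k ∈ Finset.range (n + 1), (Nat.choose n k : ℚ) * W k * 3 ^ (n - k)
      = ∑ j ∈ Finset.range (n + 1),
          (Nat.choose (2 * j) j : ℚ) * (Nat.choose (3 * j) j : ℚ) *
            ((Nat.choose n k : ℚ) * (Nat.choose k (3 * j) : ℚ) * (-3 : ℚ) ^ (k - 3 * j)
              * 3 ^ (n - k)) := by
    intro k hk
    simp only [Finset.mem_range] at hk
    have hWk : W k = ∑ j ∈ Finset.range (n + 1),
        (Nat.choose (2 * j) j : ℚ) * (Nat.choose (3 * j) j : ℚ) *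
          (Nat.choose k (3 * j) : ℚ) * (-3 : ℚ) ^ (k - 3 * j) := by
      unfold W
      apply Finset.sum_subset
      · intro j hj
        simp only [Finset.mem_range] at hj ⊢
        omega
      · intro j _ hj
        simp only [Finset.mem_range] at hj
        have : k < 3 * j := by omega
        rw [Nat.choose_eq_zero_of_lt this]
        simp
    rw [hWk, Finset.mul_sum, Finset.sum_mul]
    apply Finset.sum_congr rfl
    intro j _
    ring
  rw [Finset.sum_congr rfl hW, Finset.sum_comm]
  have hterm : ∀ j ∈ Finset.range (n + 1),
      ∑ k ∈ Finset.range (n + 1),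
        (Nat.choose (2 * j) j : ℚ) * (Nat.choose (3 * j) j : ℚ) *
          ((Nat.choose n k : ℚ) * (Nat.choose k (3 * j) : ℚ) * (-3 : ℚ) ^ (k - 3 * j)
            * 3 ^ (n - k))
      = (Nat.choose (2 * j) j : ℚ) * (Nat.choose (3 * j) j : ℚ) *
          ((Nat.choose n (3 * j) : ℚ) * (0 : ℚ) ^ (n - 3 * j)) := by
    intro j _
    rw [← Finset.mul_sum, key n (3 * j)]
  rw [Finset.sum_congr rfl hterm]
  by_cases h3 : 3 ∣ n
  · rw [if_pos h3]
    rw [Finset.sum_eq_single (n / 3)]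
    · have h1 : 3 * (n / 3) = n := by omega
      rw [h1]
      simp [Nat.choose_self]
    · intro j hj hne
      simp only [Finset.mem_range] at hj
      rcases lt_trichotomy (3 * j) n with hlt | heq | hgt
      · have : (0 : ℚ) ^ (n - 3 * j) = 0 := by
          apply zero_pow; omega
        rw [this]; ring
      · exfalso; apply hne; omega
      · rw [Nat.choose_eq_zero_of_lt hgt]
        simp
    · intro h
      simp only [Finset.mem_range] at h
      omega
  · rw [if_neg h3]
    apply Finset.sum_eq_zero
    intro j _
    rcases lt_trichotomy (3 * j) n with hlt | heq | hgt
    · have : (0 : ℚ) ^ (n - 3 * j) = 0 := by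
        apply zero_pow; omega
      rw [this]; ring
    · exfalso; exact h3 ⟨j, heq.symm⟩
    · rw [Nat.choose_eq_zero_of_lt hgt]
      simp
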